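/- There exists a constant C > 0, depending only on the graph 𝒢, such that for every x ∈ ℕ^K and every vertex i with x_i ≥ 2, one has |G_i(x) − G̃_i(x)| ≤ min(1, C/x_i). -/

import Mathlib

open Finset

/-- The closed neighbourhood `V_i = {i} ∪ {j : (i,j) ∈ E}` of a vertex `i`. -/
def closedNbhd {K : ℕ} (G : SimpleGraph (Fin K)) [DecidableRel G.Adj] (i : Fin K) :
    Finset (Fin K) :=
  insert i (G.neighborFinset i)

/-- `φ_i(x) = x_i / ∑_{j ∈ V_i} x_j`. -/
noncomputable def phi {K : ℕ} (G : SimpleGraph (Fin K)) [DecidableRel G.Adj]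
    (x : Fin K → ℝ) (i : Fin K) : ℝ :=
  x i / ∑ j ∈ closedNbhd G i, x j

/-- `G̃_i(x) = φ_i(x) exp(−∑_{j∈V_i} φ_j(x))`. -/
noncomputable def Gtil {K : ℕ} (G : SimpleGraph (Fin K)) [DecidableRel G.Adj]
    (x : Fin K → ℝ) (i : Fin K) : ℝ :=
  phi G x i * Real.exp (-∑ j ∈ closedNbhd G i, phi G x j)

/-- The success probability
`G_i(x) = (x_i/∑_{k∈V_i} x_k)·(1 − 1/∑_{k∈V_i} x_k)^{x_i−1}·∏_{j∈V_i∖{i}} (1 − 1/∑_{k∈V_j} x_k)^{x_j}`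
for `x_i > 0`, and `G_i(x) = 0` for `x_i = 0`. -/
noncomputable def Gfun {K : ℕ} (G : SimpleGraph (Fin K)) [DecidableRel G.Adj]
    (x : Fin K → ℕ) (i : Fin K) : ℝ :=
  if x i = 0 then 0
  else
    ((x i : ℝ) / ∑ k ∈ closedNbhd G i, (x k : ℝ)) *
      (1 - 1 / ∑ k ∈ closedNbhd G i, (x k : ℝ)) ^ (x i - 1) *
      ∏ j ∈ (closedNbhd G i).erase i, (1 - 1 / ∑ k ∈ closedNbhd G j, (x k : ℝ)) ^ (x j)


lemma exp_diff_le (a b : ℝ) (ha : a ≤ 0) (hb : b ≤ 0) :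
    |Real.exp a - Real.exp b| ≤ |a - b| := by
  wlog h : a ≤ b generalizing a b
  · rw [abs_sub_comm, abs_sub_comm a b]; exact this b a hb ha (le_of_not_ge h)
  rw [abs_of_nonpos (by simp [Real.exp_le_exp, h]), abs_of_nonpos (by linarith)]
  have h1 : Real.exp b ≤ 1 := Real.exp_le_one_iff.mpr hb
  have h2 : (a - b) + 1 ≤ Real.exp (a - b) := Real.add_one_le_exp (a-b)
  have h3 : Real.exp a = Real.exp b * Real.exp (a - b) := by
    rw [← Real.exp_add]; ring_nf
  have h4 : Real.exp (a - b) ≤ 1 := Real.exp_le_one_iff.mpr (by linarith)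
  nlinarith [Real.exp_pos b]

lemma log_lb (t : ℝ) (h0 : 0 < t) (h2 : t ≤ 1/2) :
    -(t + 2*t^2) ≤ Real.log (1 - t) := by
  have h1 : (0:ℝ) < 1 - t := by linarith
  have := Real.log_le_sub_one_of_pos (x := (1-t)⁻¹) (by positivity)
  rw [Real.log_inv] at this
  have hinv : (1-t)⁻¹ - 1 = t / (1-t) := by field_simp; ring
  have : t / (1-t) ≤ t + 2*t^2 := by
    rw [div_le_iff₀ h1]; nlinarith
  linarith [Real.log_le_sub_one_of_pos (x := (1-t)⁻¹) (by positivity), hinv]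

lemma log_ub (t : ℝ) (h0 : 0 < t) (h2 : t ≤ 1/2) : Real.log (1 - t) ≤ -t := by
  have : Real.log (1-t) ≤ (1-t) - 1 := Real.log_le_sub_one_of_pos (by linarith)
  linarith

lemma prod_diff_le {ι : Type*} [DecidableEq ι] (s : Finset ι) (f g : ι → ℝ)
    (hf0 : ∀ j ∈ s, 0 ≤ f j) (hf1 : ∀ j ∈ s, f j ≤ 1)
    (hg0 : ∀ j ∈ s, 0 ≤ g j) (hg1 : ∀ j ∈ s, g j ≤ 1) :
    |∏ j ∈ s, f j - ∏ j ∈ s, g j| ≤ ∑ j ∈ s, |f j - g j| := by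
  induction s using Finset.induction_on with
  | empty => simp
  | @insert a s ha ih =>
    rw [Finset.prod_insert ha, Finset.prod_insert ha, Finset.sum_insert ha]
    have hP0 : 0 ≤ ∏ j ∈ s, f j := Finset.prod_nonneg fun j hj => hf0 j (mem_insert_of_mem hj)
    have hP1 : ∏ j ∈ s, f j ≤ 1 := Finset.prod_le_one
      (fun j hj => hf0 j (mem_insert_of_mem hj)) (fun j hj => hf1 j (mem_insert_of_mem hj))
    have hQ0 : 0 ≤ ∏ j ∈ s, g j := Finset.prod_nonneg fun j hj => hg0 j (mem_insert_of_mem hj)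
    have hQ1 : ∏ j ∈ s, g j ≤ 1 := Finset.prod_le_one
      (fun j hj => hg0 j (mem_insert_of_mem hj)) (fun j hj => hg1 j (mem_insert_of_mem hj))
    have key : f a * ∏ j ∈ s, f j - g a * ∏ j ∈ s, g j
        = f a * (∏ j ∈ s, f j - ∏ j ∈ s, g j) + (f a - g a) * ∏ j ∈ s, g j := by ring
    rw [key]
    calc _ ≤ |f a * (∏ j ∈ s, f j - ∏ j ∈ s, g j)| + |(f a - g a) * ∏ j ∈ s, g j| :=
            abs_add_le _ _
      _ ≤ 1 * |∏ j ∈ s, f j - ∏ j ∈ s, g j| + |f a - g a| * 1 := by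
            rw [abs_mul, abs_mul]
            have hfa : |f a| ≤ 1 := abs_le.mpr
              ⟨by linarith [hf0 a (mem_insert_self a s)], hf1 a (mem_insert_self a s)⟩
            have hQa : |∏ j ∈ s, g j| ≤ 1 := abs_le.mpr ⟨by linarith, hQ1⟩
            have h5 := abs_nonneg (∏ j ∈ s, f j - ∏ j ∈ s, g j)
            have h6 := abs_nonneg (f a - g a)
            have h7 := abs_nonneg (f a)
            have h8 := abs_nonneg (∏ j ∈ s, g j)
            nlinarith
      _ ≤ _ := by
            have := ih (fun j hj => hf0 j (mem_insert_of_mem hj))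
              (fun j hj => hf1 j (mem_insert_of_mem hj))
              (fun j hj => hg0 j (mem_insert_of_mem hj))
              (fun j hj => hg1 j (mem_insert_of_mem hj))
            linarith

/-- per-factor bound: for `0 < t ≤ 1/2`, `n*t ≤ c`, `m ≤ n`, `n - m ≤ 1` (reals):
`|(1-t)^m(as exp) - exp(-(n t))| ≤ |m*log(1-t) + n*t|` style. We state directly:
`|(1-t)^m - exp(-(n*t))| ≤ 2*c*t + 2*(n-m)*t` where m n naturals cast. -/
lemma factor_bound (t : ℝ) (h0 : 0 < t) (h2 : t ≤ 1/2) (m : ℕ) (n : ℝ)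
    (hmn : (m:ℝ) ≤ n) (hnt : n * t ≤ 1) :
    |(1 - t) ^ m - Real.exp (-(n * t))| ≤ 2 * t + (n - (m:ℝ)) * t := by
  have h1 : (0:ℝ) < 1 - t := by linarith
  have hlogle : Real.log (1 - t) ≤ -t := log_ub t h0 h2
  have hloggt : -(t + 2*t^2) ≤ Real.log (1 - t) := log_lb t h0 h2
  have hpow : (1 - t) ^ m = Real.exp ((m:ℝ) * Real.log (1 - t)) := by
    rw [← Real.log_pow, Real.exp_log (by positivity)]
  rw [hpow]
  have hm0 : (0:ℝ) ≤ (m:ℝ) := Nat.cast_nonneg m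
  have ha : (m:ℝ) * Real.log (1 - t) ≤ 0 :=
    mul_nonpos_of_nonneg_of_nonpos hm0 (by linarith)
  have hb : -(n * t) ≤ 0 := by nlinarith
  calc |Real.exp ((m:ℝ) * Real.log (1 - t)) - Real.exp (-(n * t))|
      ≤ |(m:ℝ) * Real.log (1 - t) - (-(n * t))| := exp_diff_le _ _ ha hb
    _ ≤ 2 * t + (n - (m:ℝ)) * t := by
        rw [abs_le]
        constructor <;> nlinarith [sq_nonneg t]

/-- There is a constant `C > 0`, depending only on the graph, such that
`|G_i(x) − G̃_i(x)| ≤ min(1, C/x_i)` whenever `x_i ≥ 2`. -/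
theorem stmt9 {K : ℕ} (G : SimpleGraph (Fin K)) [DecidableRel G.Adj] :
    ∃ C : ℝ, 0 < C ∧ ∀ x : Fin K → ℕ, ∀ i : Fin K, 2 ≤ x i →
      |Gfun G x i - Gtil G (fun k => (x k : ℝ)) i| ≤ min 1 (C / (x i : ℝ)) := by
  classical
  refine ⟨4 * K + 1, by positivity, ?_⟩
  intro x i hxi
  set s : Fin K → ℝ := fun j => ∑ k ∈ closedNbhd G j, (x k : ℝ) with hs
  have hxi2 : (2:ℝ) ≤ (x i : ℝ) := by exact_mod_cast hxi
  have hximem : ∀ j : Fin K, j ∈ closedNbhd G j := fun j => mem_insert_self j _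
  have hsym : ∀ j ∈ closedNbhd G i, i ∈ closedNbhd G j := by
    intro j hj
    rcases Finset.mem_insert.mp hj with h | h
    · subst h; exact mem_insert_self _ _
    · refine Finset.mem_insert_of_mem ?_
      rw [SimpleGraph.mem_neighborFinset] at h ⊢
      exact h.symm
  have hslb : ∀ j ∈ closedNbhd G i, (x i : ℝ) ≤ s j := by
    intro j hj
    exact Finset.single_le_sum (f := fun k => ((x k : ℕ):ℝ))
      (fun k _ => Nat.cast_nonneg _) (hsym j hj)
  have hspos : ∀ j ∈ closedNbhd G i, 0 < s j :=
    fun j hj => lt_of_lt_of_le (by linarith) (hslb j hj)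
  have hxj_le : ∀ j : Fin K, (x j : ℝ) ≤ s j := by
    intro j
    exact Finset.single_le_sum (f := fun k => ((x k : ℕ):ℝ))
      (fun k _ => Nat.cast_nonneg _) (hximem j)
  -- the two product representations
  set f : Fin K → ℝ := fun j => (1 - 1 / s j) ^ (if j = i then x i - 1 else x j) with hf
  set g : Fin K → ℝ := fun j => Real.exp (-((x j : ℝ) / s j)) with hg
  have hGfun : Gfun G x i = ((x i : ℝ) / s i) * ∏ j ∈ closedNbhd G i, f j := by
    rw [Gfun, if_neg (by omega)]
    rw [← Finset.mul_prod_erase _ f (hximem i)]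
    have : ∏ j ∈ (closedNbhd G i).erase i, f j
        = ∏ j ∈ (closedNbhd G i).erase i, (1 - 1 / s j) ^ (x j) := by
      refine Finset.prod_congr rfl fun j hj => ?_
      rw [hf]; simp only [if_neg (Finset.mem_erase.mp hj).1]
    have hfi : f i = (1 - 1 / s i) ^ (x i - 1) := by
      simp [hf]
    rw [this, hfi]; ring
  have hGtil : Gtil G (fun k => (x k : ℝ)) i
      = ((x i : ℝ) / s i) * ∏ j ∈ closedNbhd G i, g j := by
    rw [Gtil, phi]
    congr 1
    rw [← Finset.sum_neg_distrib, Real.exp_sum]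
    refine Finset.prod_congr rfl fun j hj => ?_
    rw [hg, phi]
  -- basic bounds on t_j = 1/s j for j ∈ V_i
  have hkey : ∀ j ∈ closedNbhd G i, |f j - g j| ≤ 3 / (x i : ℝ) := by
    intro j hj
    have hsj := hspos j hj
    have hsjlb := hslb j hj
    have ht0 : 0 < 1 / s j := by positivity
    have ht2 : 1 / s j ≤ 1/2 := by
      rw [div_le_div_iff₀ hsj (by norm_num)]; linarith
    have hti : 1 / s j ≤ 1 / (x i : ℝ) := by
      apply one_div_le_one_div_of_le (by linarith) hsjlb
    have hnt : (x j : ℝ) * (1 / s j) ≤ 1 := by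
      rw [mul_one_div, div_le_one hsj]; exact hxj_le j
    have hmn : ((if j = i then x i - 1 else x j : ℕ) : ℝ) ≤ (x j : ℝ) := by
      split
      · next h => subst h; exact_mod_cast Nat.sub_le _ _
      · exact le_refl _
    have hnm : (x j : ℝ) - ((if j = i then x i - 1 else x j : ℕ) : ℝ) ≤ 1 := by
      split
      · next h =>
          subst h
          rw [Nat.cast_sub (by omega)]
          norm_num
      · simp
    have hfb := factor_bound (1 / s j) ht0 ht2 (if j = i then x i - 1 else x j) (x j) hmn hnt
    simp only [hf, hg]
    rw [div_eq_mul_one_div ((x j : ℝ)) (s j)]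
    refine hfb.trans ?_
    have h3 : 3 / (x i : ℝ) = 2 * (1 / (x i : ℝ)) + 1 * (1 / (x i : ℝ)) := by ring
    rw [h3]
    have hnm0 : (0:ℝ) ≤ (x j : ℝ) - ((if j = i then x i - 1 else x j : ℕ) : ℝ) := by linarith
    nlinarith [mul_nonneg hnm0 ht0.le]
  -- boundedness of factors
  have hbase : ∀ j ∈ closedNbhd G i, 0 ≤ 1 - 1 / s j ∧ 1 - 1 / s j ≤ 1 := by
    intro j hj
    have h2 : 1 / s j ≤ 1/2 := by
      rw [div_le_div_iff₀ (hspos j hj) (by norm_num)]; linarith [hslb j hj]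
    have h0 : 0 < 1 / s j := div_pos one_pos (hspos j hj)
    constructor <;> linarith
  have hf0 : ∀ j ∈ closedNbhd G i, 0 ≤ f j := fun j hj =>
    pow_nonneg (hbase j hj).1 _
  have hf1 : ∀ j ∈ closedNbhd G i, f j ≤ 1 := fun j hj =>
    pow_le_one₀ (hbase j hj).1 (hbase j hj).2
  have hg0 : ∀ j ∈ closedNbhd G i, 0 ≤ g j := fun j hj => (Real.exp_pos _).le
  have hg1 : ∀ j ∈ closedNbhd G i, g j ≤ 1 := by
    intro j hj
    apply Real.exp_le_one_iff.mpr
    have h1 : (0:ℝ) ≤ (x j : ℝ) / s j := div_nonneg (Nat.cast_nonneg _) (hspos j hj).le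
    linarith
  have hprod := prod_diff_le (closedNbhd G i) f g hf0 hf1 hg0 hg1
  have hsum : ∑ j ∈ closedNbhd G i, |f j - g j|
      ≤ (closedNbhd G i).card * (3 / (x i : ℝ)) := by
    have := Finset.sum_le_card_nsmul (closedNbhd G i) (fun j => |f j - g j|)
      (3 / (x i : ℝ)) hkey
    simpa [nsmul_eq_mul] using this
  have hcard : ((closedNbhd G i).card : ℝ) ≤ (K : ℝ) := by
    have h := Finset.card_le_univ (closedNbhd G i)
    simp only [Finset.card_univ, Fintype.card_fin] at h
    exact_mod_cast h
  -- phi bounds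
  have hsipos : 0 < s i := hspos i (hximem i)
  have hphi0 : 0 ≤ (x i : ℝ) / s i := by positivity
  have hphi1 : (x i : ℝ) / s i ≤ 1 := (div_le_one hsipos).mpr (hxj_le i)
  -- products in [0,1]
  have hP0 : 0 ≤ ∏ j ∈ closedNbhd G i, f j := Finset.prod_nonneg hf0
  have hP1 : ∏ j ∈ closedNbhd G i, f j ≤ 1 := Finset.prod_le_one hf0 hf1
  have hQ0 : 0 ≤ ∏ j ∈ closedNbhd G i, g j := Finset.prod_nonneg hg0
  have hQ1 : ∏ j ∈ closedNbhd G i, g j ≤ 1 := Finset.prod_le_one hg0 hg1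
  have hmain : |Gfun G x i - Gtil G (fun k => (x k : ℝ)) i|
      = ((x i : ℝ) / s i) * |∏ j ∈ closedNbhd G i, f j - ∏ j ∈ closedNbhd G i, g j| := by
    rw [hGfun, hGtil, ← mul_sub, abs_mul, abs_of_nonneg hphi0]
  refine le_min ?_ ?_
  · rw [hmain]
    have habs : |∏ j ∈ closedNbhd G i, f j - ∏ j ∈ closedNbhd G i, g j| ≤ 1 :=
      abs_le.mpr ⟨by linarith, by linarith⟩
    exact mul_le_one₀ hphi1 (abs_nonneg _) habs
  · rw [hmain]
    have hxi0 : (0:ℝ) < (x i : ℝ) := by linarith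
    calc ((x i : ℝ) / s i) * |∏ j ∈ closedNbhd G i, f j - ∏ j ∈ closedNbhd G i, g j|
        ≤ 1 * ((closedNbhd G i).card * (3 / (x i : ℝ))) := by
          apply mul_le_mul hphi1 (hprod.trans hsum) (abs_nonneg _) zero_le_one
      _ ≤ (4 * K + 1) / (x i : ℝ) := by
          rw [one_mul]
          have heq : ((closedNbhd G i).card : ℝ) * (3 / (x i : ℝ))
              = (3 * ((closedNbhd G i).card : ℝ)) / (x i : ℝ) := by ring
          rw [heq]
          gcongr
          have hK0 : (0:ℝ) ≤ (K:ℝ) := Nat.cast_nonneg K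
          linarith
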